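/- Let k be a field, A a finite-dimensional k-algebra, I a two-sided ideal of A, and U ⊆ T two torsion classes in mod A. Then T ∩ mod(A/I) = U ∩ mod(A/I) (where mod(A/I) is the class of finitely generated A-modules annihilated by I) if and only if every brick S with S ∈ T and Hom_A(U', S) = 0 for all U' ∈ U satisfies I·S ≠ 0. -/

import Mathlib

universe u

/-- A torsion class in the category `mod A` of finitely generated `A`-modules:
a class of finitely generated modules, containing the zero modules, closed under
isomorphism, images of surjective homomorphisms (factor modules) and extensions. -/
def IsTorsionClass (A : Type u) [Ring A] (T : Set (ModuleCat.{u} A)) : Prop :=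
  (∀ M ∈ T, Module.Finite A M) ∧
  (∀ M : ModuleCat.{u} A, Subsingleton M → M ∈ T) ∧
  (∀ M N : ModuleCat.{u} A, M ∈ T → Nonempty (M ≃ₗ[A] N) → N ∈ T) ∧
  (∀ (M N : ModuleCat.{u} A) (f : M →ₗ[A] N), Function.Surjective f → M ∈ T → N ∈ T) ∧
  (∀ (M : ModuleCat.{u} A) (S : Submodule A M),
     ModuleCat.of A S ∈ T → ModuleCat.of A (M ⧸ S) ∈ T → M ∈ T)

/-- The smallest torsion class containing a class `C` of modules: the intersection of
all torsion classes containing `C`. -/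
def torsGen (A : Type u) [Ring A] (C : Set (ModuleCat.{u} A)) : Set (ModuleCat.{u} A) :=
  ⋂₀ {T | IsTorsionClass A T ∧ C ⊆ T}

/-- A brick: a nonzero finitely generated module all of whose nonzero endomorphisms are
invertible. -/
def IsBrick (A : Type u) [Ring A] (S : ModuleCat.{u} A) : Prop :=
  Nontrivial S ∧ Module.Finite A S ∧ ∀ f : S →ₗ[A] S, f ≠ 0 → Function.Bijective f

/-- `mod (A/I)`, identified with the class of finitely generated `A`-modules
annihilated by the two-sided ideal `I`. -/
def annMod (A : Type u) [Ring A] (I : TwoSidedIdeal A) : Set (ModuleCat.{u} A) :=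
  {X : ModuleCat.{u} A | Module.Finite A X ∧ ∀ a ∈ I, ∀ x : X, a • x = 0}

section Aux
variable {A : Type u} [Ring A]

lemma ann_of_surj (I : TwoSidedIdeal A) {M N : Type u} [AddCommGroup M] [Module A M]
    [AddCommGroup N] [Module A N] (f : M →ₗ[A] N) (hf : Function.Surjective f)
    (h : ∀ a ∈ I, ∀ x : M, a • x = 0) : ∀ a ∈ I, ∀ y : N, a • y = 0 := by
  intro a ha y
  obtain ⟨x, rfl⟩ := hf y
  rw [← map_smul, h a ha x, map_zero]

lemma tors_ext {U : Set (ModuleCat.{u} A)} (hU : IsTorsionClass A U)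
    {X : ModuleCat.{u} A} {N P : Submodule A X} (hNP : N ≤ P)
    (hN : ModuleCat.of A N ∈ U)
    (hQ : ModuleCat.of A (↥P ⧸ N.comap P.subtype) ∈ U) :
    ModuleCat.of A ↥P ∈ U := by
  apply hU.2.2.2.2 (ModuleCat.of A ↥P) (N.comap P.subtype) ?_ hQ
  exact hU.2.2.1 _ _ hN ⟨(Submodule.comapSubtypeEquivOfLe hNP).symm⟩

lemma exists_hom_zero_quotient {U : Set (ModuleCat.{u} A)} (hU : IsTorsionClass A U)
    (X : ModuleCat.{u} A) [IsNoetherian A X] (hX : X ∉ U) :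
    ∃ N : Submodule A X, N ≠ ⊤ ∧
      ∀ U' ∈ U, ∀ f : U' →ₗ[A] (ModuleCat.of A (X ⧸ N)), f = 0 := by
  set s : Set (Submodule A X) := {N | ModuleCat.of A ↥N ∈ U} with hs
  have hbot : (⊥ : Submodule A X) ∈ s := hU.2.1 _ inferInstance
  obtain ⟨N, hNs, hNmax⟩ := set_has_maximal_iff_noetherian.mpr ‹IsNoetherian A X› s ⟨⊥, hbot⟩
  have hmax : ∀ N' ∈ s, N' ≤ N := by
    intro N' hN'
    have hsup : N ⊔ N' ∈ s := by
      apply tors_ext hU (le_sup_left : N ≤ N ⊔ N') hNs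
      set Q := (N.comap (N ⊔ N').subtype) with hQdef
      have hg : Function.Surjective
          ⇑(Q.mkQ ∘ₗ Submodule.inclusion (le_sup_right : N' ≤ N ⊔ N')) := by
        intro z
        obtain ⟨⟨x, hx⟩, rfl⟩ := Q.mkQ_surjective z
        obtain ⟨n, hn, n', hn', rfl⟩ := Submodule.mem_sup.mp hx
        refine ⟨⟨n', hn'⟩, ?_⟩
        simp only [LinearMap.coe_comp, Function.comp_apply, Submodule.mkQ_apply]
        rw [Submodule.Quotient.eq]
        have h1 : n' - (n + n') ∈ N := by simpa using neg_mem hn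
        simpa [hQdef, Submodule.mem_comap] using h1
      exact hU.2.2.2.1 (ModuleCat.of A ↥N') (ModuleCat.of A (↥(N ⊔ N') ⧸ Q)) _ hg hN'
    have := hNmax _ hsup
    have heq : N ⊔ N' = N := by
      by_contra hne
      exact this (lt_of_le_of_ne le_sup_left (Ne.symm hne))
    exact le_sup_right.trans heq.le
  refine ⟨N, ?_, ?_⟩
  · rintro rfl
    exact hX (hU.2.2.1 _ _ hNs ⟨Submodule.topEquiv⟩)
  · intro U' hU' f
    set P := (LinearMap.range f).comap N.mkQ with hP
    have hNP : N ≤ P := by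
      intro x hx
      refine Submodule.mem_comap.mpr ?_
      have h0 : (Submodule.Quotient.mk x : ↑X ⧸ N) = 0 :=
        (Submodule.Quotient.mk_eq_zero N).mpr hx
      show (Submodule.Quotient.mk x : ↑X ⧸ N) ∈ LinearMap.range f
      rw [h0]
      exact Submodule.zero_mem _
    have hrange : ModuleCat.of A ↥(LinearMap.range f) ∈ U :=
      hU.2.2.2.1 U' (ModuleCat.of A ↥(LinearMap.range f)) f.rangeRestrict
        f.surjective_rangeRestrict hU'
    have hPs : P ∈ s := by
      apply tors_ext hU hNP hNs
      set φ : ↥P →ₗ[A] ↥(LinearMap.range f) :=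
        (N.mkQ ∘ₗ P.subtype).codRestrict (LinearMap.range f) (fun p => p.2)
      have hφ : Function.Surjective φ := by
        rintro ⟨z, hz⟩
        obtain ⟨x, rfl⟩ := N.mkQ_surjective z
        exact ⟨⟨x, by simpa [hP, Submodule.mem_comap] using hz⟩, rfl⟩
      have hker : LinearMap.ker φ = N.comap P.subtype := by
        ext ⟨x, hx⟩
        simp only [φ, LinearMap.mem_ker, Subtype.ext_iff, Submodule.mem_comap,
          LinearMap.codRestrict_apply, Submodule.coe_subtype, ZeroMemClass.coe_zero]
        show Submodule.Quotient.mk x = (0 : (↑X ⧸ N)) ↔ x ∈ N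
        exact Submodule.Quotient.mk_eq_zero N
      rw [← hker]
      exact hU.2.2.1 _ _ hrange ⟨(φ.quotKerEquivOfSurjective hφ).symm⟩
    have hPN : P ≤ N := hmax _ hPs
    have : LinearMap.range f = ⊥ := by
      have h1 : LinearMap.range f = P.map N.mkQ := by
        rw [hP, Submodule.map_comap_eq_of_surjective N.mkQ_surjective]
      rw [h1]
      refine le_bot_iff.mp ?_
      intro z hz
      obtain ⟨x, hx, rfl⟩ := hz
      exact (Submodule.mem_bot _).mpr ((Submodule.Quotient.mk_eq_zero N).mpr (hPN hx))
      
    exact LinearMap.range_eq_bot.mp this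

end Aux

/-- For torsion classes `U ⊆ T` and a two-sided ideal `I`,
`T ∩ mod (A/I) = U ∩ mod (A/I)` iff every brick `S ∈ T` with `Hom_A(U', S) = 0`
for all `U' ∈ U` satisfies `I·S ≠ 0`. -/
theorem tors_congruent_iff_bricks_not_annihilated (k A : Type u) [Field k] [Ring A]
    [Algebra k A] [FiniteDimensional k A] (I : TwoSidedIdeal A)
    (T U : Set (ModuleCat.{u} A)) (hT : IsTorsionClass A T) (hU : IsTorsionClass A U)
    (hUT : U ⊆ T) :
    T ∩ annMod A I = U ∩ annMod A I ↔
    ∀ S : ModuleCat.{u} A, IsBrick A S → S ∈ T →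
      (∀ U' ∈ U, ∀ f : U' →ₗ[A] S, f = 0) →
      ∃ a ∈ I, ∃ x : S, a • x ≠ 0 := by
  constructor
  · intro heq S hB hST hhom
    by_contra hno
    push_neg at hno
    have hmem : S ∈ T ∩ annMod A I := ⟨hST, hB.2.1, hno⟩
    rw [heq] at hmem
    have hid : (LinearMap.id : S →ₗ[A] S) = 0 := hhom S hmem.1 LinearMap.id
    haveI : Nontrivial S := hB.1
    obtain ⟨x, hx⟩ := exists_ne (0 : S)
    exact hx (by simpa using LinearMap.congr_fun hid x)
  · intro hyp
    refine Set.Subset.antisymm ?_ (Set.inter_subset_inter_left _ hUT)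
    rintro X ⟨hXT, hXfin, hXann⟩
    refine ⟨?_, hXfin, hXann⟩
    by_contra hXU
    haveI : IsNoetherianRing A := isNoetherian_of_tower k inferInstance
    haveI : IsArtinianRing A := isArtinian_of_tower k inferInstance
    haveI : Module.Finite A X := hXfin
    haveI : IsNoetherian A X := inferInstance
    obtain ⟨N, hNtop, hNhom⟩ := exists_hom_zero_quotient hU X hXU
    set Y : ModuleCat.{u} A := ModuleCat.of A (X ⧸ N) with hYdef
    have hYT : Y ∈ T := hT.2.2.2.1 X Y N.mkQ N.mkQ_surjective hXT
    have hYann : ∀ a ∈ I, ∀ y : Y, a • y = 0 := ann_of_surj I N.mkQ N.mkQ_surjective hXann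
    haveI : Module.Finite A Y := inferInstanceAs (Module.Finite A (X ⧸ N))
    haveI : IsNoetherian A Y := inferInstance
    haveI hYnt : Nontrivial Y :=
      Submodule.Quotient.nontrivial_iff.mpr hNtop
    set t : Set (Submodule A Y) :=
      {K | K ≠ ⊤ ∧ ∀ U' ∈ U, ∀ f : ↥U' →ₗ[A] (↥Y ⧸ K), f = 0} with htdef
    have hbot : (⊥ : Submodule A Y) ∈ t := by
      constructor
      · intro h
        obtain ⟨y, hy⟩ := exists_ne (0 : Y)
        have : y ∈ (⊥ : Submodule A Y) := h ▸ Submodule.mem_top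
        exact hy ((Submodule.mem_bot _).mp this)
      · intro U' hU' f
        set e := Submodule.quotEquivOfEqBot (⊥ : Submodule A ↥Y) rfl with hedef
        have h0 : (e.toLinearMap ∘ₗ f) = 0 := hNhom U' hU' _
        ext u
        have hu := LinearMap.congr_fun h0 u
        simp only [LinearMap.comp_apply, LinearMap.zero_apply, LinearEquiv.coe_coe] at hu ⊢
        exact e.map_eq_zero_iff.mp hu
    obtain ⟨K, hKt, hKmax⟩ :=
      set_has_maximal_iff_noetherian.mpr ‹IsNoetherian A Y› t ⟨⊥, hbot⟩
    set S : ModuleCat.{u} A := ModuleCat.of A (↥Y ⧸ K) with hSdef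
    haveI hSnt : Nontrivial S :=
      Submodule.Quotient.nontrivial_iff.mpr hKt.1
    haveI : Module.Finite A S := inferInstanceAs (Module.Finite A (↥Y ⧸ K))
    have hST : S ∈ T := hT.2.2.2.1 Y S K.mkQ K.mkQ_surjective hYT
    have hSann : ∀ a ∈ I, ∀ x : S, a • x = 0 := ann_of_surj I K.mkQ K.mkQ_surjective hYann
    have hbij : ∀ f : S →ₗ[A] S, f ≠ 0 → Function.Bijective f := by
      intro f hf
      set K' : Submodule A ↥Y := (LinearMap.ker f).comap K.mkQ with hK'def
      have hKK' : K ≤ K' := by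
        intro x hx
        refine Submodule.mem_comap.mpr ?_
        have h0 : (Submodule.Quotient.mk x : ↥Y ⧸ K) = 0 :=
          (Submodule.Quotient.mk_eq_zero K).mpr hx
        show (Submodule.Quotient.mk x : ↥Y ⧸ K) ∈ LinearMap.ker f
        rw [h0]
        exact Submodule.zero_mem _
      have hK'ker : K' = LinearMap.ker (f ∘ₗ K.mkQ) := (LinearMap.ker_comp K.mkQ f).symm
      set j : (↥Y ⧸ K') →ₗ[A] S := K'.liftQ (f ∘ₗ K.mkQ) (le_of_eq hK'ker) with hjdef
      have hjinj : Function.Injective j :=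
        LinearMap.ker_eq_bot.mp (Submodule.ker_liftQ_eq_bot' K' (f ∘ₗ K.mkQ) hK'ker)
      have hK't : K' ∈ t := by
        constructor
        · intro htop
          apply hf
          apply LinearMap.ext
          intro z
          obtain ⟨y, rfl⟩ := K.mkQ_surjective z
          have hy : y ∈ K' := htop ▸ Submodule.mem_top
          exact Submodule.mem_comap.mp hy
        · intro U' hU' f'
          have h0 : j ∘ₗ f' = 0 := hKt.2 U' hU' (j ∘ₗ f')
          apply LinearMap.ext
          intro u
          apply hjinj
          simpa using LinearMap.congr_fun h0 u
      have heqK : K' = K := by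
        by_contra hne
        exact hKmax K' hK't (lt_of_le_of_ne hKK' (Ne.symm hne))
      have hker : LinearMap.ker f ≤ ⊥ := by
        intro z hz
        obtain ⟨y, rfl⟩ := K.mkQ_surjective z
        have hy : y ∈ K' := Submodule.mem_comap.mpr hz
        rw [heqK] at hy
        exact (Submodule.mem_bot _).mpr ((Submodule.Quotient.mk_eq_zero K).mpr hy)
      have hinj : Function.Injective f := LinearMap.ker_eq_bot.mp (le_bot_iff.mp hker)
      exact ⟨hinj, IsArtinian.surjective_of_injective_endomorphism f hinj⟩
    obtain ⟨a, ha, x, hx⟩ := hyp S ⟨hSnt, ‹Module.Finite A S›, hbij⟩ hST hKt.2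
    exact hx (hSann a ha x)
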